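/- arXiv:1106.6008 — 2 statements merged into one kernel-verified Lean document; each statement's English description precedes it below -/
import Mathlib

section
/- Let π* be a probability measure on Ω that is a steady state for the EVP kernel. Then the PVP map T preserves the measure μ* = m ⊗ π* on Σ = [0,1) × Ω, i.e. μ*(T⁻¹A) = μ*(A) for every measurable A ⊆ Σ. -/
open MeasureTheory Filter Topology
open scoped ENNReal NNReal Classical

noncomputable section

/-- Points of the lattice `ℤ^d`. -/
abbrev Zd (d : ℕ) := Fin d → ℤ

/-- The natural embedding of `ℤ^d` into `ℝ^d`. -/
def zdR {d : ℕ} (y : Zd d) : Fin d → ℝ := fun i => (y i : ℝ)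

/-- A random environment on `ℤ^d`: a complete probability space `(Ω, Pi)`, a group
`(tau z)` of invertible measure-preserving maps indexed by `ℤ^d`, and measurable
transition probabilities `p x y : Ω → [0,1]` with total mass one and the covariance
property `p x y (tau z ω) = p (x+z) (y+z) ω`. -/
structure RandomEnv (d : ℕ) (Ω : Type*) [MeasurableSpace Ω] where
  Pi : Measure Ω
  tau : Zd d → Ω → Ω
  p : Zd d → Zd d → Ω → ℝ
  prob : IsProbabilityMeasure Pi
  complete : Pi.IsComplete
  tau_meas : ∀ z, Measurable (tau z)
  tau_mp : ∀ z, MeasurePreserving (tau z) Pi Pi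
  tau_add : ∀ z w, tau z ∘ tau w = tau (z + w)
  tau_zero : tau 0 = id
  p_meas : ∀ x y, Measurable (p x y)
  p_nonneg : ∀ x y ω, 0 ≤ p x y ω
  p_le_one : ∀ x y ω, p x y ω ≤ 1
  p_sum : ∀ x ω, HasSum (fun y => p x y ω) 1
  p_cov : ∀ x y z ω, p x y (tau z ω) = p (x + z) (y + z) ω

variable {d : ℕ} {Ω : Type*} [MeasurableSpace Ω]

/-- The EVP (environment viewed from the particle) transition kernel
`K(ω, B) = ∑_y p_{0y}(ω) 1_B (τ_y ω)`. -/
def Kker (E : RandomEnv d Ω) (ω : Ω) (B : Set Ω) : ℝ≥0∞ :=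
  ∑' y : Zd d, if E.tau y ω ∈ B then ENNReal.ofReal (E.p 0 y ω) else 0

/-- A probability measure `ν` is a steady state for the EVP kernel. -/
def IsSteady (E : RandomEnv d Ω) (ν : Measure Ω) : Prop :=
  IsProbabilityMeasure ν ∧ ∀ B : Set Ω, MeasurableSet B → ν B = ∫⁻ ω, Kker E ω B ∂ν

/-- The `n`-step transition probabilities `p^{(n)}_{xy}(ω)`. -/
def nstep (E : RandomEnv d Ω) : ℕ → Zd d → Zd d → Ω → ℝ
  | 0, x, y, _ => if x = y then 1 else 0
  | n + 1, x, y, ω => ∑' z : Zd d, E.p x z ω * nstep E n z y ω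

/-- The set `Ω_t` of transitive environments (relative to a subgroup `Γ`). -/
def transSet (E : RandomEnv d Ω) (Γ : AddSubgroup (Zd d)) : Set Ω :=
  {ω | ∀ y ∈ Γ, ∃ n : ℕ, 1 ≤ n ∧ 0 < nstep E n 0 y ω}

/-- The set `Ω_det` of environments with a deterministic jump at the origin. -/
def detSet (E : RandomEnv d Ω) : Set Ω :=
  {ω | ∃ y₀ : Zd d, ∀ y, E.p 0 y ω = if y = y₀ then 1 else 0}

/-- `P : Ω → Measure (ℕ → ℤ^d)` is the family of quenched laws `P_ω` of the random
walk in the environment `ω`, started at the origin. -/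
def IsQuenchedLaw (E : RandomEnv d Ω) (P : Ω → Measure (ℕ → Zd d)) : Prop :=
  (∀ ω, IsProbabilityMeasure (P ω)) ∧
  (∀ B : Set (ℕ → Zd d), MeasurableSet B → Measurable fun ω => P ω B) ∧
  ∀ ω, ∀ n : ℕ, ∀ w : ℕ → Zd d,
    P ω {x | ∀ k ≤ n, x k = w k}
      = ENNReal.ofReal
          ((if w 0 = 0 then (1 : ℝ) else 0) * ∏ k ∈ Finset.range n, E.p (w k) (w (k + 1)) ω)

/-- `PP` is the annealed law on `(ℤ^d)^ℕ × Ω` with environment marginal `ν`: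
`PP (A × B) = ∫_B P_ω(A) ν(dω)`. -/
def IsAnnealedLaw (P : Ω → Measure (ℕ → Zd d)) (ν : Measure Ω)
    (PP : Measure ((ℕ → Zd d) × Ω)) : Prop :=
  ∀ A : Set (ℕ → Zd d), MeasurableSet A → ∀ B : Set Ω, MeasurableSet B →
    PP (A ×ˢ B) = ∫⁻ ω in B, P ω A ∂ν

/-- Assumption (A1): no deterministic walks, a.s. w.r.t. the annealed law. -/
def A1cond (E : RandomEnv d Ω) (PP : Measure ((ℕ → Zd d) × Ω)) : Prop :=
  ∀ᵐ z ∂PP, ∃ n : ℕ, E.tau (z.1 n) z.2 ∉ detSet E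

/-- Assumption (A2), with decay exponent `d + γ`. -/
def A2cond (E : RandomEnv d Ω) (γ : ℝ) : Prop :=
  ∃ K : ℝ, 0 < K ∧ ∀ᵐ ω ∂E.Pi, ∀ x y : Zd d, x ≠ y →
    E.p x y ω ≤ K * ‖y - x‖ ^ (-((d : ℝ) + γ))

/-- Assumption (A3): ergodicity of the environment w.r.t. the translations in `Γ`. -/
def A3cond (E : RandomEnv d Ω) (Γ : AddSubgroup (Zd d)) : Prop :=
  ∀ B : Set Ω, MeasurableSet B → (∀ z ∈ Γ, E.tau z ⁻¹' B = B) →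
    E.Pi B = 0 ∨ E.Pi B = 1

/-- Assumption (A4): partial transitivity. -/
def A4cond (E : RandomEnv d Ω) (Γ : AddSubgroup (Zd d)) : Prop :=
  0 < E.Pi (transSet E Γ)

/-- Assumption (A5): existence of an absolutely continuous steady state charging
the transitive environments. -/
def A5cond (E : RandomEnv d Ω) (Γ : AddSubgroup (Zd d)) (π' : Measure Ω) : Prop :=
  π'.AbsolutelyContinuous E.Pi ∧ IsSteady E π' ∧ 0 < π' (transSet E Γ)

/-! ### The PVP dynamical system -/

/-- Partial sums `a_n(ω)` of the jump probabilities `q_i(ω) = p_{0 d_i}(ω)`,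
relative to an enumeration `e` of `ℤ^d`. -/
def aFun (E : RandomEnv d Ω) (e : ℕ ≃ Zd d) (n : ℕ) (ω : Ω) : ℝ :=
  ∑ i ∈ Finset.range n, E.p 0 (e i) ω

/-- The index `i(s,ω)` of the interval `I_i(ω) = [a_i(ω), a_{i+1}(ω))` containing `s`. -/
def idx (E : RandomEnv d Ω) (e : ℕ ≃ Zd d) (s : ℝ) (ω : Ω) : ℕ :=
  sInf {i : ℕ | s < aFun E e (i + 1) ω}

/-- The displacement function `D(s,ω) = d_{i(s,ω)}`. -/
def Dfun (E : RandomEnv d Ω) (e : ℕ ≃ Zd d) (sω : ℝ × Ω) : Zd d :=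
  e (idx E e sω.1 sω.2)

/-- The PVP map `T(s,ω) = (φ(s,ω), τ_{D(s,ω)} ω)` on `Σ = I × Ω`. -/
def Tmap (E : RandomEnv d Ω) (e : ℕ ≃ Zd d) : ℝ × Ω → ℝ × Ω :=
  fun sω =>
    ((sω.1 - aFun E e (idx E e sω.1 sω.2) sω.2) / E.p 0 (Dfun E e sω) sω.2,
      E.tau (Dfun E e sω) sω.2)

/-- The measure `m ⊗ ν` on `Σ = [0,1) × Ω` (with `m` Lebesgue measure on `[0,1)`). -/
def pvpMeasure (ν : Measure Ω) : Measure (ℝ × Ω) :=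
  (volume.restrict (Set.Ico (0 : ℝ) 1)).prod ν

/-- The random walk `X_n(s,ω) = ∑_{k<n} D(T^k(s,ω))` read off from the PVP system. -/
def Xwalk (E : RandomEnv d Ω) (e : ℕ ≃ Zd d) (n : ℕ) (sω : ℝ × Ω) : Zd d :=
  ∑ k ∈ Finset.range n, Dfun E e ((Tmap E e)^[k] sω)

/-- The point-of-view-of-the-particle map `F` on `(ℤ^d)^ℕ × Ω`. -/
def Fmap (E : RandomEnv d Ω) : (ℕ → Zd d) × Ω → (ℕ → Zd d) × Ω :=
  fun z => (fun n => z.1 (n + 1) - z.1 1, E.tau (z.1 1) z.2)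

/-- `Q` is the law on `Ω^ℕ` of the stationary EVP Markov chain with kernel `K`
and initial distribution `ν`. -/
def IsEVPLaw (E : RandomEnv d Ω) (ν : Measure Ω) (Q : Measure (ℕ → Ω)) : Prop :=
  IsProbabilityMeasure Q ∧
  Measure.map (fun f : ℕ → Ω => f 0) Q = ν ∧
  ∀ n : ℕ, ∀ A' : Set (Fin (n + 1) → Ω), MeasurableSet A' →
    ∀ C : Set Ω, MeasurableSet C →
      Q ({f | (fun k : Fin (n + 1) => f k.val) ∈ A'} ∩ {f | f (n + 1) ∈ C})
        = ∫⁻ f in {f | (fun k : Fin (n + 1) => f k.val) ∈ A'}, Kker E (f n) C ∂Q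

/-- The local drift `δ(ω) = ∑_y p_{0y}(ω) y`, viewed in `ℝ^d`. -/
def localDrift (E : RandomEnv d Ω) (ω : Ω) : Fin d → ℝ :=
  ∑' y : Zd d, E.p 0 y ω • zdR y

/-- A doubly stochastic environment: `Π`-a.s., `∑_x p_{xy}(ω) = 1` for every `y`. -/
def DoublyStochastic (E : RandomEnv d Ω) : Prop :=
  ∀ᵐ ω ∂E.Pi, ∀ y : Zd d, HasSum (fun x => E.p x y ω) 1

/-- The covariance matrix `C = ∫_Ω ∑_y p_{0y}(ω) (y ⊗ y) Π(dω)`. -/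
def covMatrix (E : RandomEnv d Ω) : Matrix (Fin d) (Fin d) ℝ :=
  fun i j => ∫ ω, (∑' y : Zd d, E.p 0 y ω * (zdR y i * zdR y j)) ∂E.Pi


/-- The conjugacy `Φ(s,ω) = ((X_n(s,ω))_n, ω)` between the PVP system and the
annealed process. -/
def PhiMap (E : RandomEnv d Ω) (e : ℕ ≃ Zd d) : ℝ × Ω → (ℕ → Zd d) × Ω :=
  fun sω => (fun n => Xwalk E e n sω, sω.2)

end

section Aux

open Filter

variable {d : ℕ} {Ω : Type*} [MeasurableSpace Ω] (E : RandomEnv d Ω) (e : ℕ ≃ Zd d)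

private lemma meas_of_nat {α β : Type*} [MeasurableSpace α] [MeasurableSpace β]
    {h : α → ℕ} (hh : Measurable h) {g : ℕ → α → β} (hg : ∀ n, Measurable (g n)) :
    Measurable (fun x => g (h x) x) := by
  intro B hB
  have hset : (fun x => g (h x) x) ⁻¹' B = ⋃ n, (h ⁻¹' {n} ∩ g n ⁻¹' B) := by
    ext x
    simp only [Set.mem_preimage, Set.mem_iUnion, Set.mem_inter_iff, Set.mem_singleton_iff]
    constructor
    · intro hx; exact ⟨h x, rfl, hx⟩
    · rintro ⟨n, hn, hx⟩; rw [hn]; exact hx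
  rw [hset]
  exact MeasurableSet.iUnion fun n => (hh (measurableSet_singleton n)).inter (hg n hB)

private lemma aFun_measurable (n : ℕ) : Measurable (aFun E e n) :=
  Finset.measurable_sum _ fun i _ => E.p_meas 0 (e i)

private lemma aFun_nonneg (n : ℕ) (ω : Ω) : 0 ≤ aFun E e n ω :=
  Finset.sum_nonneg fun i _ => E.p_nonneg _ _ ω

private lemma aFun_succ (n : ℕ) (ω : Ω) :
    aFun E e (n + 1) ω = aFun E e n ω + E.p 0 (e n) ω :=
  Finset.sum_range_succ _ n

private lemma aFun_mono (ω : Ω) : Monotone fun n => aFun E e n ω :=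
  monotone_nat_of_le_succ fun n => by
    rw [aFun_succ]
    exact le_add_of_nonneg_right (E.p_nonneg _ _ ω)

private lemma hasSum_q (ω : Ω) : HasSum (fun i => E.p 0 (e i) ω) 1 :=
  e.hasSum_iff.mpr (E.p_sum 0 ω)

private lemma aFun_le_one (n : ℕ) (ω : Ω) : aFun E e n ω ≤ 1 :=
  sum_le_hasSum _ (fun i _ => E.p_nonneg _ _ ω) (hasSum_q E e ω)

private lemma aFun_tendsto (ω : Ω) :
    Tendsto (fun n => aFun E e n ω) atTop (nhds 1) :=
  (hasSum_q E e ω).tendsto_sum_nat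

private lemma idx_nonempty {s : ℝ} (hs : s < 1) (ω : Ω) :
    {i : ℕ | s < aFun E e (i + 1) ω}.Nonempty := by
  obtain ⟨i, hi⟩ := ((aFun_tendsto E e ω).eventually_const_lt hs).exists
  exact ⟨i, lt_of_lt_of_le hi (aFun_mono E e ω (Nat.le_succ i))⟩

private lemma idx_lt {s : ℝ} (hs : s < 1) (ω : Ω) :
    s < aFun E e (idx E e s ω + 1) ω :=
  Nat.sInf_mem (idx_nonempty E e hs ω)

private lemma idx_le {s : ℝ} (hs : 0 ≤ s) (ω : Ω) :
    aFun E e (idx E e s ω) ω ≤ s := by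
  cases h : idx E e s ω with
  | zero => simpa [aFun] using hs
  | succ m =>
    have hm : m < sInf {i : ℕ | s < aFun E e (i + 1) ω} := by
      rw [show sInf {i : ℕ | s < aFun E e (i + 1) ω} = m + 1 from h]
      exact Nat.lt_succ_self m
    have := Nat.notMem_of_lt_sInf hm
    exact le_of_not_gt this

private lemma idx_eq {s : ℝ} {n : ℕ} (ω : Ω)
    (h1 : aFun E e n ω ≤ s) (h2 : s < aFun E e (n + 1) ω) :
    idx E e s ω = n := by
  refine le_antisymm (Nat.sInf_le h2) (le_of_not_gt fun hlt => ?_)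
  have hmem : idx E e s ω ∈ {i : ℕ | s < aFun E e (i + 1) ω} :=
    Nat.sInf_mem ⟨n, h2⟩
  have : s < aFun E e n ω :=
    lt_of_lt_of_le hmem (aFun_mono E e ω (Nat.succ_le_of_lt hlt))
  exact absurd h1 (not_le.mpr this)

private lemma idx_measurable :
    Measurable fun x : ℝ × Ω => idx E e x.1 x.2 := by
  apply measurable_to_countable'
  intro n
  have hU : ∀ m : ℕ, MeasurableSet {x : ℝ × Ω | x.1 < aFun E e (m + 1) x.2} :=
    fun m => measurableSet_lt measurable_fst ((aFun_measurable E e (m + 1)).comp measurable_snd)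
  have heq : (fun x : ℝ × Ω => idx E e x.1 x.2) ⁻¹' {n} =
      ({x : ℝ × Ω | x.1 < aFun E e (n + 1) x.2} ∩
        ⋂ m, ⋂ (_ : m < n), {x : ℝ × Ω | x.1 < aFun E e (m + 1) x.2}ᶜ)
      ∪ ({_x : ℝ × Ω | n = 0} ∩ ⋂ m : ℕ, {x : ℝ × Ω | x.1 < aFun E e (m + 1) x.2}ᶜ) := by
    ext x
    simp only [Set.mem_preimage, Set.mem_singleton_iff, Set.mem_union, Set.mem_inter_iff,
      Set.mem_iInter, Set.mem_compl_iff, Set.mem_setOf_eq]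
    constructor
    · rintro rfl
      by_cases hne : {i : ℕ | x.1 < aFun E e (i + 1) x.2}.Nonempty
      · exact Or.inl ⟨Nat.sInf_mem hne, fun m hm => Nat.notMem_of_lt_sInf hm⟩
      · refine Or.inr ⟨?_, fun m hm => hne ⟨m, hm⟩⟩
        show sInf {i : ℕ | x.1 < aFun E e (i + 1) x.2} = 0
        rw [Set.not_nonempty_iff_eq_empty.mp hne, Nat.sInf_empty]
    · rintro (⟨h1, h2⟩ | ⟨h0, hall⟩)
      · have hne : {i : ℕ | x.1 < aFun E e (i + 1) x.2}.Nonempty := ⟨n, h1⟩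
        exact le_antisymm (Nat.sInf_le h1)
          (le_of_not_gt fun hlt => h2 _ hlt (Nat.sInf_mem hne))
      · show sInf {i : ℕ | x.1 < aFun E e (i + 1) x.2} = n
        have hSe : {i : ℕ | x.1 < aFun E e (i + 1) x.2} = ∅ :=
          Set.eq_empty_iff_forall_notMem.mpr hall
        rw [hSe, Nat.sInf_empty, h0]
  rw [heq]
  exact ((hU n).inter (MeasurableSet.iInter fun m =>
      MeasurableSet.iInter fun _ => (hU m).compl)).union
    ((MeasurableSet.const _).inter (MeasurableSet.iInter fun m => (hU m).compl))

private lemma Tmap_measurable : Measurable (Tmap E e) := by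
  have hrfl : Tmap E e = fun x : ℝ × Ω =>
      (fun n (x : ℝ × Ω) =>
        ((x.1 - aFun E e n x.2) / E.p 0 (e n) x.2, E.tau (e n) x.2))
        (idx E e x.1 x.2) x := rfl
  rw [hrfl]
  have hgm : ∀ n : ℕ, Measurable fun x : ℝ × Ω =>
      ((x.1 - aFun E e n x.2) / E.p 0 (e n) x.2, E.tau (e n) x.2) := fun n =>
    Measurable.prodMk
      ((measurable_fst.sub ((aFun_measurable E e n).comp measurable_snd)).div
        ((E.p_meas 0 (e n)).comp measurable_snd))
      ((E.tau_meas (e n)).comp measurable_snd)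
  exact meas_of_nat (idx_measurable E e) hgm

private lemma volume_preimage_affine {a q : ℝ} (hq : 0 < q) {S : Set ℝ}
    (hS : MeasurableSet S) :
    volume ((fun s => (s - a) / q) ⁻¹' S) = ENNReal.ofReal q * volume S := by
  have h1 : (fun s : ℝ => (s - a) / q) = (fun u : ℝ => q⁻¹ * u) ∘ (fun s : ℝ => s - a) := by
    funext s; simp [div_eq_inv_mul]
  rw [h1, Set.preimage_comp]
  have hS' : MeasurableSet ((fun u : ℝ => q⁻¹ * u) ⁻¹' S) := measurable_const_mul _ hS
  rw [(measurePreserving_sub_right volume a).measure_preimage hS'.nullMeasurableSet,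
    ← Measure.map_apply (measurable_const_mul _) hS,
    Real.map_volume_mul_left (inv_ne_zero hq.ne'), inv_inv, abs_of_pos hq,
    Measure.smul_apply, smul_eq_mul]

private lemma slice_decomp (A : Set (ℝ × Ω)) (hA : MeasurableSet A) (ω : Ω) :
    (volume.restrict (Set.Ico (0 : ℝ) 1)) ((fun s => (s, ω)) ⁻¹' (Tmap E e ⁻¹' A))
      = ∑' n : ℕ, ENNReal.ofReal (E.p 0 (e n) ω) *
          (volume.restrict (Set.Ico (0 : ℝ) 1)) ((fun t => (t, E.tau (e n) ω)) ⁻¹' A) := by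
  set Tsl : Set ℝ := (fun s => (s, ω)) ⁻¹' (Tmap E e ⁻¹' A) with hTsl_def
  have hTsl : MeasurableSet Tsl :=
    ((Tmap_measurable E e).comp (measurable_id.prodMk measurable_const)) hA
  have hAn : ∀ n : ℕ, MeasurableSet ((fun t => (t, E.tau (e n) ω)) ⁻¹' A) :=
    fun n => (measurable_id.prodMk measurable_const) hA
  rw [Measure.restrict_apply hTsl]
  have hcover : Tsl ∩ Set.Ico (0 : ℝ) 1
      = ⋃ n, (Tsl ∩ Set.Ico (aFun E e n ω) (aFun E e (n + 1) ω)) := by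
    ext s
    simp only [Set.mem_inter_iff, Set.mem_iUnion, Set.mem_Ico]
    constructor
    · rintro ⟨h1, h2, h3⟩
      exact ⟨idx E e s ω, h1, idx_le E e h2 ω, idx_lt E e h3 ω⟩
    · rintro ⟨n, h1, h2, h3⟩
      exact ⟨h1, le_trans (aFun_nonneg E e n ω) h2,
        lt_of_lt_of_le h3 (aFun_le_one E e (n + 1) ω)⟩
  have hdisj : Pairwise (Function.onFun Disjoint
      fun n => Tsl ∩ Set.Ico (aFun E e n ω) (aFun E e (n + 1) ω)) := by
    have key : ∀ i j : ℕ, i < j →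
        Disjoint (Tsl ∩ Set.Ico (aFun E e i ω) (aFun E e (i + 1) ω))
          (Tsl ∩ Set.Ico (aFun E e j ω) (aFun E e (j + 1) ω)) := by
      intro i j hij
      refine Set.disjoint_left.mpr ?_
      rintro s ⟨-, -, h2⟩ ⟨-, h3, -⟩
      have : aFun E e (i + 1) ω ≤ aFun E e j ω := aFun_mono E e ω hij
      linarith
    exact fun i j hij => (Ne.lt_or_gt hij).elim (key i j) fun h => (key j i h).symm
  have hmeas : ∀ n : ℕ,
      MeasurableSet (Tsl ∩ Set.Ico (aFun E e n ω) (aFun E e (n + 1) ω)) :=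
    fun n => hTsl.inter measurableSet_Ico
  rw [hcover, measure_iUnion hdisj hmeas]
  refine tsum_congr fun n => ?_
  rcases eq_or_lt_of_le (E.p_nonneg 0 (e n) ω) with h0 | hq
  · have hempty : Set.Ico (aFun E e n ω) (aFun E e (n + 1) ω) = ∅ := by
      rw [aFun_succ, ← h0, add_zero, Set.Ico_self]
    rw [hempty, Set.inter_empty, measure_empty, ← h0, ENNReal.ofReal_zero, zero_mul]
  · have hsucc : aFun E e (n + 1) ω = aFun E e n ω + E.p 0 (e n) ω := aFun_succ E e n ω
    have hset : Tsl ∩ Set.Ico (aFun E e n ω) (aFun E e (n + 1) ω)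
        = (fun s => (s - aFun E e n ω) / E.p 0 (e n) ω) ⁻¹'
            (((fun t => (t, E.tau (e n) ω)) ⁻¹' A) ∩ Set.Ico (0 : ℝ) 1) := by
      ext s
      simp only [Set.mem_inter_iff, Set.mem_Ico, Set.mem_preimage, hTsl_def]
      constructor
      · rintro ⟨h1, h2, h3⟩
        have hid : idx E e s ω = n := idx_eq E e ω h2 h3
        have hT : Tmap E e (s, ω)
            = ((s - aFun E e n ω) / E.p 0 (e n) ω, E.tau (e n) ω) := by
          simp [Tmap, Dfun, hid]
        rw [hT] at h1
        refine ⟨h1, div_nonneg (sub_nonneg.mpr h2) hq.le, ?_⟩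
        rw [div_lt_one hq]
        rw [hsucc] at h3
        linarith
      · rintro ⟨h1, h2, h3⟩
        have hs2 : aFun E e n ω ≤ s := by
          have := mul_nonneg h2 hq.le
          rw [div_mul_cancel₀ _ hq.ne'] at this
          linarith
        have hs3 : s < aFun E e (n + 1) ω := by
          have := mul_lt_mul_of_pos_right h3 hq
          rw [div_mul_cancel₀ _ hq.ne', one_mul] at this
          rw [hsucc]; linarith
        have hid : idx E e s ω = n := idx_eq E e ω hs2 hs3
        have hT : Tmap E e (s, ω)
            = ((s - aFun E e n ω) / E.p 0 (e n) ω, E.tau (e n) ω) := by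
          simp [Tmap, Dfun, hid]
        exact ⟨by rw [hT]; exact h1, hs2, hs3⟩
    rw [hset, volume_preimage_affine hq ((hAn n).inter measurableSet_Ico),
      Measure.restrict_apply (hAn n)]

end Aux

/-- If `π'` is a steady state for the EVP kernel, then the PVP map `T`
preserves the measure `μ* = m ⊗ π'` on `Σ = [0,1) × Ω`. -/
theorem pvp_map_measure_preserving
    {d : ℕ} (hd : 1 ≤ d) {Ω : Type*} [MeasurableSpace Ω] (E : RandomEnv d Ω)
    (e : ℕ ≃ Zd d) (π' : Measure Ω) (hsteady : IsSteady E π') :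
    ∀ A : Set (ℝ × Ω), MeasurableSet A →
      pvpMeasure π' (Tmap E e ⁻¹' A) = pvpMeasure π' A := by
  intro A hA
  haveI : IsProbabilityMeasure π' := hsteady.1
  set g : Ω → ℝ≥0∞ :=
    fun ω' => (volume.restrict (Set.Ico (0 : ℝ) 1)) ((fun t => (t, ω')) ⁻¹' A) with hg
  have hgmeas : Measurable g := measurable_measure_prodMk_right hA
  set κ : Ω → Measure Ω := fun ω =>
    Measure.sum fun y : Zd d => ENNReal.ofReal (E.p 0 y ω) • Measure.dirac (E.tau y ω) with hκ
  have hκapp : ∀ (ω : Ω) {B : Set Ω}, MeasurableSet B →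
      κ ω B = ∑' y : Zd d, ENNReal.ofReal (E.p 0 y ω) * B.indicator 1 (E.tau y ω) := by
    intro ω B hB
    rw [hκ]
    simp only [Measure.sum_apply _ hB, Measure.smul_apply, Measure.dirac_apply' _ hB,
      smul_eq_mul]
  have hκmeas : Measurable κ := by
    apply Measure.measurable_of_measurable_coe
    intro B hB
    have hfun : (fun ω => κ ω B)
        = fun ω => ∑' y : Zd d, ENNReal.ofReal (E.p 0 y ω) * B.indicator 1 (E.tau y ω) :=
      funext fun ω => hκapp ω hB
    rw [hfun]
    exact Measurable.ennreal_tsum fun y =>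
      (ENNReal.measurable_ofReal.comp (E.p_meas 0 y)).mul
        ((measurable_one.indicator hB).comp (E.tau_meas y))
  have hbind : π'.bind κ = π' := by
    ext B hB
    rw [Measure.bind_apply hB hκmeas.aemeasurable, hsteady.2 B hB]
    refine lintegral_congr fun ω => ?_
    rw [hκapp ω hB]
    show _ = ∑' y : Zd d, if E.tau y ω ∈ B then ENNReal.ofReal (E.p 0 y ω) else 0
    exact tsum_congr fun y => by simp [Set.indicator_apply, mul_ite]
  have hTA : MeasurableSet (Tmap E e ⁻¹' A) := Tmap_measurable E e hA
  simp only [pvpMeasure]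
  rw [Measure.prod_apply_symm hTA, Measure.prod_apply_symm hA]
  calc
    ∫⁻ ω, (volume.restrict (Set.Ico (0 : ℝ) 1))
        ((fun s => (s, ω)) ⁻¹' (Tmap E e ⁻¹' A)) ∂π'
      = ∫⁻ ω, ∫⁻ x, g x ∂(κ ω) ∂π' := by
        refine lintegral_congr fun ω => ?_
        rw [slice_decomp E e A hA ω]
        have hterm : ∀ y : Zd d,
            ∫⁻ x, g x ∂(ENNReal.ofReal (E.p 0 y ω) • Measure.dirac (E.tau y ω))
              = ENNReal.ofReal (E.p 0 y ω) * g (E.tau y ω) := fun y => by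
          rw [lintegral_smul_measure, lintegral_dirac' _ hgmeas, smul_eq_mul]
        rw [hκ]
        rw [lintegral_sum_measure, tsum_congr hterm]
        exact e.tsum_eq fun y => ENNReal.ofReal (E.p 0 y ω) * g (E.tau y ω)
    _ = ∫⁻ x, g x ∂(π'.bind κ) := (Measure.lintegral_bind hκmeas.aemeasurable hgmeas.aemeasurable).symm
    _ = ∫⁻ ω', g ω' ∂π' := by rw [hbind]
end

section
/- Under assumptions (A1)–(A5), the measures Π and π* are equivalent, i.e. Π is absolutely continuous with respect to π* and π* is absolutely continuous with respect to Π. -/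
open MeasureTheory Filter Topology
open scoped ENNReal NNReal Classical

noncomputable section

variable {d : ℕ} {Ω : Type*} [MeasurableSpace Ω]

section Aux
variable (E : RandomEnv d Ω)

lemma nstep_nonneg : ∀ (n : ℕ) (x y : Zd d) (ω : Ω), 0 ≤ nstep E n x y ω
  | 0, x, y, ω => by dsimp [nstep]; split <;> norm_num
  | n + 1, x, y, ω =>
    tsum_nonneg fun z => mul_nonneg (E.p_nonneg _ _ _) (nstep_nonneg n z y ω)

lemma nstep_le_one : ∀ (n : ℕ) (x y : Zd d) (ω : Ω), nstep E n x y ω ≤ 1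
  | 0, x, y, ω => by dsimp [nstep]; split <;> norm_num
  | n + 1, x, y, ω => by
    have hs : Summable (fun z => E.p x z ω) := (E.p_sum x ω).summable
    have hb : ∀ z, E.p x z ω * nstep E n z y ω ≤ E.p x z ω := fun z =>
      mul_le_of_le_one_right (E.p_nonneg _ _ _) (nstep_le_one n z y ω)
    have hnn : ∀ z, 0 ≤ E.p x z ω * nstep E n z y ω := fun z =>
      mul_nonneg (E.p_nonneg _ _ _) (nstep_nonneg E n z y ω)
    have hsum : Summable (fun z => E.p x z ω * nstep E n z y ω) :=
      Summable.of_nonneg_of_le hnn hb hs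
    calc nstep E (n + 1) x y ω = ∑' z, E.p x z ω * nstep E n z y ω := rfl
      _ ≤ ∑' z, E.p x z ω := Summable.tsum_le_tsum hb hsum hs
      _ = 1 := (E.p_sum x ω).tsum_eq

lemma nstep_summable (n : ℕ) (x y : Zd d) (ω : Ω) :
    Summable (fun z => E.p x z ω * nstep E n z y ω) :=
  Summable.of_nonneg_of_le
    (fun z => mul_nonneg (E.p_nonneg _ _ _) (nstep_nonneg E n z y ω))
    (fun z => mul_le_of_le_one_right (E.p_nonneg _ _ _) (nstep_le_one E n z y ω))
    (E.p_sum x ω).summable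

lemma nstep_cov : ∀ (n : ℕ) (x y z : Zd d) (ω : Ω),
    nstep E n x y (E.tau z ω) = nstep E n (x + z) (y + z) ω
  | 0, x, y, z, ω => by
    dsimp [nstep]
    by_cases h : x = y
    · simp [h]
    · rw [if_neg h, if_neg (fun hc => h (by simpa using congrArg (· - z) hc))]
  | n + 1, x, y, z, ω => by
    calc nstep E (n + 1) x y (E.tau z ω)
        = ∑' w, E.p x w (E.tau z ω) * nstep E n w y (E.tau z ω) := rfl
      _ = ∑' w, E.p (x + z) (w + z) ω * nstep E n (w + z) (y + z) ω := by
          refine tsum_congr fun w => ?_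
          rw [E.p_cov, nstep_cov n w y z ω]
      _ = ∑' w, E.p (x + z) w ω * nstep E n w (y + z) ω := by
          simpa using (Equiv.addRight z).tsum_eq
            (fun w => E.p (x + z) w ω * nstep E n w (y + z) ω)
      _ = nstep E (n + 1) (x + z) (y + z) ω := rfl

lemma nstep_measurable : ∀ (n : ℕ) (x y : Zd d), Measurable fun ω => nstep E n x y ω
  | 0, x, y => measurable_const
  | n + 1, x, y => by
    have key : (fun ω => nstep E (n + 1) x y ω)
        = fun ω => (∑' z : Zd d, ENNReal.ofReal (E.p x z ω * nstep E n z y ω)).toReal := by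
      funext ω
      rw [← ENNReal.ofReal_tsum_of_nonneg
            (fun z => mul_nonneg (E.p_nonneg _ _ _) (nstep_nonneg E n z y ω))
            (nstep_summable E n x y ω),
          ENNReal.toReal_ofReal
            (tsum_nonneg fun z => mul_nonneg (E.p_nonneg _ _ _) (nstep_nonneg E n z y ω))]
      rfl
    rw [key]
    exact (Measurable.ennreal_tsum fun z =>
      ((E.p_meas x z).mul (nstep_measurable n z y)).ennreal_ofReal).ennreal_toReal

lemma measurableSet_transSet (Γ : AddSubgroup (Zd d)) : MeasurableSet (transSet E Γ) := by
  have h : transSet E Γ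
      = ⋂ y ∈ (Γ : Set (Zd d)), ⋃ n : ℕ, ⋃ _ : 1 ≤ n, {ω | 0 < nstep E n 0 y ω} := by
    ext ω; simp [transSet]
  rw [h]
  exact MeasurableSet.biInter (Set.to_countable _) fun y _ =>
    MeasurableSet.iUnion fun n => MeasurableSet.iUnion fun _ =>
      measurableSet_lt measurable_const (nstep_measurable E n 0 y)

lemma ae_comp_tau (z : Zd d) {Q : Ω → Prop} (h : ∀ᵐ ω ∂E.Pi, Q ω) :
    ∀ᵐ ω ∂E.Pi, Q (E.tau z ω) := by
  rw [ae_iff] at h ⊢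
  exact (E.tau_mp z).quasiMeasurePreserving.preimage_null h

end Aux

end

/-- Under (A1)-(A5), the measures `Π` and `π*` are equivalent. -/
theorem steady_state_equivalent_to_Pi
    {d : ℕ} (hd : 1 ≤ d) {Ω : Type*} [MeasurableSpace Ω] (E : RandomEnv d Ω)
    (Γ : AddSubgroup (Zd d))
    (P : Ω → Measure (ℕ → Zd d)) (hP : IsQuenchedLaw E P)
    (PP : Measure ((ℕ → Zd d) × Ω)) (hPP : IsAnnealedLaw P E.Pi PP)
    (π' : Measure Ω)
    (hA1 : A1cond E PP) (hA2 : ∃ γ > (0 : ℝ), A2cond E γ)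
    (hA3 : A3cond E Γ) (hA4 : A4cond E Γ) (hA5 : A5cond E Γ π') :
    π'.AbsolutelyContinuous E.Pi ∧ E.Pi.AbsolutelyContinuous π' := by
  obtain ⟨hac, hsteady, htrans⟩ := hA5
  haveI : IsProbabilityMeasure E.Pi := E.prob
  haveI : IsProbabilityMeasure π' := hsteady.1
  set f : Ω → ℝ≥0∞ := π'.rnDeriv E.Pi with hfdef
  have hfmeas : Measurable f := Measure.measurable_rnDeriv _ _
  set A : Set Ω := {ω | 0 < f ω} with hAdef
  have hAmeas : MeasurableSet A := measurableSet_lt measurable_const hfmeas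
  have hwd : E.Pi.withDensity f = π' := Measure.withDensity_rnDeriv_eq _ _ hac
  have hpi'_eq : ∀ N : Set Ω, MeasurableSet N → π' N = ∫⁻ ω in N, f ω ∂E.Pi := by
    intro N hN; rw [← hwd, withDensity_apply _ hN]
  have nullPull : ∀ N : Set Ω, MeasurableSet N → π' N = 0 → E.Pi (N ∩ A) = 0 := by
    intro N hN h0
    rw [hpi'_eq N hN] at h0
    have hae := (lintegral_eq_zero_iff hfmeas).mp h0
    rw [EventuallyEq, ae_iff] at hae
    have h1 : E.Pi (N ∩ A) = E.Pi.restrict N A := by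
      rw [Measure.restrict_apply hAmeas, Set.inter_comm]
    rw [h1]
    refine measure_mono_null ?_ hae
    intro ω hω
    simpa using hω.ne'
  have hAc : π' Aᶜ = 0 := by
    rw [hpi'_eq _ hAmeas.compl]
    have h0 : ∀ᵐ ω ∂E.Pi, ω ∈ Aᶜ → f ω = (fun _ => (0 : ℝ≥0∞)) ω := by
      refine ae_of_all _ fun ω hω => ?_
      simpa using le_antisymm (by simpa [hAdef] using hω) zero_le
    rw [setLIntegral_congr_fun_ae hAmeas.compl h0]
    simp
  -- Step 1: one-step absorption
  set S : Set Ω := {ω | ∀ y : Zd d, 0 < E.p 0 y ω → E.tau y ω ∈ A} with hSdef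
  have hSmeas : MeasurableSet S := by
    have h : S = ⋂ y : Zd d, ({ω | 0 < E.p 0 y ω}ᶜ ∪ E.tau y ⁻¹' A) := by
      ext ω
      simp only [hSdef, Set.mem_setOf_eq, Set.mem_iInter, Set.mem_union, Set.mem_compl_iff,
        Set.mem_preimage]
      exact forall_congr' fun y => imp_iff_not_or
    rw [h]
    exact MeasurableSet.iInter fun y =>
      ((measurableSet_lt measurable_const (E.p_meas 0 y)).compl).union ((E.tau_meas y) hAmeas)
  have hKmeas : Measurable fun ω => Kker E ω Aᶜ :=
    Measurable.ennreal_tsum fun y =>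
      Measurable.ite ((E.tau_meas y) hAmeas.compl) ((E.p_meas 0 y).ennreal_ofReal)
        measurable_const
  have hK0 : ∀ᵐ ω ∂π', Kker E ω Aᶜ = 0 := by
    have h := hsteady.2 Aᶜ hAmeas.compl
    rw [hAc] at h
    have h2 := (lintegral_eq_zero_iff hKmeas).mp h.symm
    filter_upwards [h2] with ω hω using hω
  have hSae : ∀ᵐ ω ∂π', ω ∈ S := by
    filter_upwards [hK0] with ω hω
    intro y hpy
    by_contra hnot
    have h0 := ENNReal.tsum_eq_zero.mp hω y
    rw [if_pos (Set.mem_compl hnot)] at h0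
    exact absurd (ENNReal.ofReal_eq_zero.mp h0) (not_le.mpr hpy)
  have hpiS : π' Sᶜ = 0 := ae_iff.mp hSae
  have hstep1 : ∀ᵐ ω ∂E.Pi, ω ∈ A → ω ∈ S := by
    have hN := nullPull Sᶜ hSmeas.compl hpiS
    rw [ae_iff]
    refine measure_mono_null ?_ hN
    intro ω hω
    rw [Set.mem_setOf_eq, Classical.not_imp] at hω
    exact ⟨hω.2, hω.1⟩
  -- Step 2: n-step absorption
  have Hn : ∀ n : ℕ, ∀ᵐ ω ∂E.Pi, ∀ y : Zd d,
      ω ∈ A → 0 < nstep E n 0 y ω → E.tau y ω ∈ A := by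
    intro n
    induction n with
    | zero =>
      refine ae_of_all _ fun ω y hA0 h0 => ?_
      have hy : (0 : Zd d) = y := by
        by_contra hne
        rw [show nstep E 0 0 y ω = if (0 : Zd d) = y then 1 else 0 from rfl, if_neg hne] at h0
        exact lt_irrefl _ h0
      rw [← hy, E.tau_zero]
      exact hA0
    | succ n ih =>
      have ih' : ∀ᵐ ω ∂E.Pi, ∀ z : Zd d, ∀ y : Zd d,
          E.tau z ω ∈ A → 0 < nstep E n 0 y (E.tau z ω) → E.tau y (E.tau z ω) ∈ A :=
        ae_all_iff.mpr fun z => ae_comp_tau E z ih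
      filter_upwards [hstep1, ih'] with ω h1 h2 y hAω hpos
      have hpos' : 0 < ∑' z, E.p 0 z ω * nstep E n z y ω := hpos
      have hex : ∃ z, 0 < E.p 0 z ω * nstep E n z y ω := by
        by_contra hc
        push_neg at hc
        have hz : ∀ z, E.p 0 z ω * nstep E n z y ω = 0 := fun z =>
          le_antisymm (hc z) (mul_nonneg (E.p_nonneg _ _ _) (nstep_nonneg E n z y ω))
        have : (fun z => E.p 0 z ω * nstep E n z y ω) = fun _ => (0 : ℝ) := funext hz
        rw [this, tsum_zero] at hpos'
        exact lt_irrefl _ hpos'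
      obtain ⟨z, hz⟩ := hex
      have hp : 0 < E.p 0 z ω := by
        rcases (E.p_nonneg 0 z ω).lt_or_eq with h | h
        · exact h
        · exfalso; rw [← h, zero_mul] at hz; exact lt_irrefl _ hz
      have hns : 0 < nstep E n z y ω := by
        rcases (nstep_nonneg E n z y ω).lt_or_eq with h | h
        · exact h
        · exfalso; rw [← h, mul_zero] at hz; exact lt_irrefl _ hz
      have hτz : E.tau z ω ∈ A := h1 hAω z hp
      have hcov : 0 < nstep E n 0 (y - z) (E.tau z ω) := by
        rw [nstep_cov, zero_add, sub_add_cancel]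
        exact hns
      have hfin := h2 z (y - z) hτz hcov
      rwa [← Function.comp_apply (f := E.tau (y - z)), E.tau_add, sub_add_cancel] at hfin
  have Hall : ∀ᵐ ω ∂E.Pi, ∀ n : ℕ, ∀ y : Zd d,
      ω ∈ A → 0 < nstep E n 0 y ω → E.tau y ω ∈ A := ae_all_iff.mpr Hn
  have Hall' : ∀ᵐ ω ∂E.Pi, ∀ z : Zd d, ∀ n : ℕ, ∀ y : Zd d,
      E.tau z ω ∈ A → 0 < nstep E n 0 y (E.tau z ω) → E.tau y (E.tau z ω) ∈ A :=
    ae_all_iff.mpr fun z => ae_comp_tau E z Hall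
  -- Step 3: the Γ-invariant set B
  set B : Set Ω := ⋃ y ∈ (Γ : Set (Zd d)), E.tau y ⁻¹' (A ∩ transSet E Γ) with hBdef
  have hCmeas : MeasurableSet (A ∩ transSet E Γ) := hAmeas.inter (measurableSet_transSet E Γ)
  have hBmeas : MeasurableSet B :=
    MeasurableSet.biUnion (Set.to_countable _) fun y _ => (E.tau_meas y) hCmeas
  have hBinv : ∀ z ∈ Γ, E.tau z ⁻¹' B = B := by
    intro z hzΓ
    ext ω
    simp only [hBdef, Set.mem_preimage, Set.mem_iUnion, SetLike.mem_coe, exists_prop]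
    constructor
    · rintro ⟨y, hy, hmem⟩
      refine ⟨y + z, Γ.add_mem hy hzΓ, ?_⟩
      rwa [← Function.comp_apply (f := E.tau y), E.tau_add] at hmem
    · rintro ⟨y, hy, hmem⟩
      refine ⟨y - z, Γ.sub_mem hy hzΓ, ?_⟩
      rw [← Function.comp_apply (f := E.tau (y - z)), E.tau_add, sub_add_cancel]
      exact hmem
  have hsub0 : A ∩ transSet E Γ ⊆ B := by
    intro ω hω
    refine Set.mem_biUnion Γ.zero_mem ?_
    rw [Set.mem_preimage, E.tau_zero]
    exact hω
  have hposAT : E.Pi (A ∩ transSet E Γ) ≠ 0 := by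
    intro h0
    have hπ0 : π' (A ∩ transSet E Γ) = 0 := hac h0
    have hle : π' (transSet E Γ) ≤ π' (A ∩ transSet E Γ) + π' Aᶜ := by
      refine le_trans (measure_mono fun ω hω => ?_) (measure_union_le _ _)
      by_cases hA' : ω ∈ A
      · exact Or.inl ⟨hA', hω⟩
      · exact Or.inr hA'
    rw [hπ0, hAc, add_zero] at hle
    exact htrans.ne' (le_antisymm hle zero_le)
  have hB1 : E.Pi B = 1 := by
    rcases hA3 B hBmeas hBinv with h | h
    · exact absurd (le_antisymm (h ▸ measure_mono hsub0) zero_le) hposAT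
    · exact h
  have hBA : ∀ᵐ ω ∂E.Pi, ω ∈ B → ω ∈ A := by
    filter_upwards [Hall'] with ω hω hmem
    simp only [hBdef, Set.mem_iUnion, Set.mem_preimage, SetLike.mem_coe, exists_prop] at hmem
    obtain ⟨y, hyΓ, hyA, hyT⟩ := hmem
    obtain ⟨n, _, hnpos⟩ := hyT (-y) (Γ.neg_mem hyΓ)
    have hfin := hω y n (-y) hyA hnpos
    rwa [← Function.comp_apply (f := E.tau (-y)), E.tau_add, neg_add_cancel, E.tau_zero,
      id_eq] at hfin
  have hAfull : E.Pi Aᶜ = 0 := by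
    have hBA0 : E.Pi (B ∩ Aᶜ) = 0 := by
      rw [ae_iff] at hBA
      refine measure_mono_null ?_ hBA
      intro ω hω
      rw [Set.mem_setOf_eq, Classical.not_imp]
      exact ⟨hω.1, hω.2⟩
    have hle : E.Pi Aᶜ ≤ E.Pi Bᶜ + E.Pi (B ∩ Aᶜ) := by
      refine le_trans (measure_mono fun ω hω => ?_) (measure_union_le _ _)
      by_cases h : ω ∈ B
      · exact Or.inr ⟨h, hω⟩
      · exact Or.inl h
    rw [hBA0, (prob_compl_eq_zero_iff hBmeas).mpr hB1, add_zero] at hle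
    exact le_antisymm hle zero_le
  refine ⟨hac, Measure.AbsolutelyContinuous.mk fun s hs h0 => ?_⟩
  have h1 : E.Pi (s ∩ A) = 0 := nullPull s hs h0
  have hle : E.Pi s ≤ E.Pi (s ∩ A) + E.Pi Aᶜ := by
    refine le_trans (measure_mono fun ω hω => ?_) (measure_union_le _ _)
    by_cases h : ω ∈ A
    · exact Or.inl ⟨hω, h⟩
    · exact Or.inr h
  rw [h1, hAfull, add_zero] at hle
  exact le_antisymm hle zero_le
end
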